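/- Let ≺ be a strict linear order on ℕ that is not stable-ish, i.e., there is no set V ⊆ ℕ that is nonempty, downward closed under ≺, has no ≺-maximum element, and whose complement is nonempty and has no ≺-minimum element. Then there is a function f : ℕ → ℕ, computable relative to (the characteristic function of the code of) ≺, that is either an infinite ascending sequence or an infinite descending sequence for ≺. -/

import Mathlib

/-- Partial functions on `ℕ` that are recursive in an oracle `O : ℕ → ℕ`
(the relativization of `Nat.Partrec`). -/
inductive OracleRecursiveIn (O : ℕ → ℕ) : (ℕ →. ℕ) → Prop
  | zero : OracleRecursiveIn O (pure 0)
  | succ : OracleRecursiveIn O ↑Nat.succ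
  | left : OracleRecursiveIn O ↑fun n : ℕ => n.unpair.1
  | right : OracleRecursiveIn O ↑fun n : ℕ => n.unpair.2
  | oracle : OracleRecursiveIn O ↑O
  | pair {f g} : OracleRecursiveIn O f → OracleRecursiveIn O g →
      OracleRecursiveIn O fun n => Nat.pair <$> f n <*> g n
  | comp {f g} : OracleRecursiveIn O f → OracleRecursiveIn O g →
      OracleRecursiveIn O fun n => g n >>= f
  | prec {f g} : OracleRecursiveIn O f → OracleRecursiveIn O g →
      OracleRecursiveIn O (Nat.unpaired fun a n =>
        n.rec (f a) fun y IH => do let i ← IH; g (Nat.pair a (Nat.pair y i)))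
  | rfind {f} : OracleRecursiveIn O f →
      OracleRecursiveIn O fun a => Nat.rfind fun n => (fun m => m = 0) <$> f (Nat.pair a n)

/-- The characteristic function of a set of naturals. -/
noncomputable def charFun (A : Set ℕ) : ℕ → ℕ := A.indicator fun _ => 1

/-- `A` is Turing reducible to `B`. -/
def TuringRed (A B : Set ℕ) : Prop := OracleRecursiveIn (charFun B) ↑(charFun A)

/-- The recursive join `A ⊕ B` of two sets of naturals. -/
def setJoin (A B : Set ℕ) : Set ℕ :=
  {n | (∃ m ∈ A, n = 2 * m) ∨ (∃ m ∈ B, n = 2 * m + 1)}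

/-- A Turing ideal: a nonempty collection of subsets of `ℕ` closed under join and
closed downward under Turing reducibility. -/
def IsTuringIdeal (I : Set (Set ℕ)) : Prop :=
  I.Nonempty ∧ (∀ A ∈ I, ∀ B ∈ I, setJoin A B ∈ I) ∧
    ∀ A B : Set ℕ, TuringRed A B → B ∈ I → A ∈ I

/-- The code of a binary relation on `ℕ` as a set of naturals. -/
def codeRel (R : ℕ → ℕ → Prop) : Set ℕ := {n | ∃ x y, R x y ∧ n = Nat.pair x y}

/-- The code of a function `ℕ → ℕ` (its graph) as a set of naturals. -/
def codeFun (f : ℕ → ℕ) : Set ℕ := {n | ∃ k, n = Nat.pair k (f k)}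

/-- A strict linear order `≺` on ℕ is stable-ish if there is a nonempty initial
segment `V` with no `≺`-maximum whose complement is nonempty with no `≺`-minimum. -/
def StableIsh (prec : ℕ → ℕ → Prop) : Prop :=
  ∃ V : Set ℕ, V.Nonempty ∧ (∀ x y, prec x y → y ∈ V → x ∈ V) ∧
    (∀ x ∈ V, ∃ y ∈ V, prec x y) ∧
    Vᶜ.Nonempty ∧ (∀ x ∈ Vᶜ, ∃ y ∈ Vᶜ, prec y x)

namespace OracleRecursiveIn

variable {O : ℕ → ℕ}

theorem of_eq {f g : ℕ →. ℕ} (h : OracleRecursiveIn O f) (e : ∀ n, f n = g n) :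
    OracleRecursiveIn O g := (funext e : f = g) ▸ h

theorem of_partrec {f : ℕ →. ℕ} (h : Nat.Partrec f) : OracleRecursiveIn O f := by
  induction h with
  | zero => exact zero
  | succ => exact succ
  | left => exact left
  | right => exact right
  | pair _ _ ih₁ ih₂ => exact pair ih₁ ih₂
  | comp _ _ ih₁ ih₂ => exact comp ih₁ ih₂
  | prec _ _ ih₁ ih₂ => exact prec ih₁ ih₂
  | rfind _ ih => exact rfind ih

theorem of_primrec {f : ℕ → ℕ} (h : Primrec f) : OracleRecursiveIn O ↑f :=
  of_partrec (Nat.Partrec.of_primrec (Primrec.nat_iff.1 h))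

theorem totalComp {f g : ℕ → ℕ} (hf : OracleRecursiveIn O ↑f) (hg : OracleRecursiveIn O ↑g) :
    OracleRecursiveIn O ↑(fun n => f (g n)) :=
  (comp hf hg).of_eq fun n => by simp [PFun.coe_val, Part.bind_eq_bind, Part.bind_some]; exact Part.bind_some _ _

theorem totalPair {f g : ℕ → ℕ} (hf : OracleRecursiveIn O ↑f) (hg : OracleRecursiveIn O ↑g) :
    OracleRecursiveIn O ↑(fun n => Nat.pair (f n) (g n)) :=
  (pair hf hg).of_eq fun n => by simp [PFun.coe_val, Seq.seq]

theorem totalComp₂ {h : ℕ → ℕ → ℕ} {f g : ℕ → ℕ} (hh : Primrec₂ h)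
    (hf : OracleRecursiveIn O ↑f) (hg : OracleRecursiveIn O ↑g) :
    OracleRecursiveIn O ↑(fun n => h (f n) (g n)) :=
  (totalComp (f := Nat.unpaired h) (of_primrec (Primrec₂.unpaired.2 hh)) (totalPair hf hg)).of_eq
    fun n => by simp

theorem rfindEval {t : ℕ → ℕ} (htot : ∀ x, ∃ y, t (Nat.pair x y) = 0) (x : ℕ) :
    (Nat.rfind fun y => (fun m => m = 0) <$> Part.some (t (Nat.pair x y))) =
      Part.some (Nat.find (htot x)) := by
  rw [Part.eq_some_iff]
  refine Nat.mem_rfind.2 ?_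
  constructor
  · simp [PFun.coe_val]
    exact Nat.find_spec (htot x)
  · intro m hm
    simp [PFun.coe_val]
    exact Nat.find_min (htot x) hm

theorem recSearch {t : ℕ → ℕ} (ht : OracleRecursiveIn O ↑t) (a : ℕ)
    (htot : ∀ x, ∃ y, t (Nat.pair x y) = 0) :
    OracleRecursiveIn O ↑(fun n => Nat.rec a (fun _ ih => Nat.find (htot ih)) n : ℕ → ℕ) := by
  have hproj : OracleRecursiveIn O ↑(fun n : ℕ => n.unpair.2.unpair.2) :=
    totalComp (f := fun n : ℕ => n.unpair.2) (g := fun n : ℕ => n.unpair.2) right right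
  have hR := OracleRecursiveIn.rfind ht
  have hstep := OracleRecursiveIn.comp hR hproj
  have hbase : OracleRecursiveIn O ↑(fun _ : ℕ => a) := of_primrec (Primrec.const a)
  have hF := OracleRecursiveIn.prec hbase hstep
  have hpairing : OracleRecursiveIn O ↑(fun n : ℕ => Nat.pair 0 n) :=
    of_primrec (Primrec₂.natPair.comp (Primrec.const 0) Primrec.id)
  have hfinal := OracleRecursiveIn.comp hF hpairing
  apply hfinal.of_eq
  intro n
  simp only [PFun.coe_val, Part.bind_eq_bind, Part.bind_some, Nat.unpaired, Nat.unpair_pair]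
  induction n with
  | zero => rfl
  | succ n ih =>
      simp only [Nat.rec_add_one]
      rw [ih]
      simp only [Part.bind_eq_bind, Part.bind_some, Nat.unpair_pair]
      rw [rfindEval htot]

end OracleRecursiveIn

theorem chain_of_step {r : ℕ → ℕ → Prop} (htr : ∀ {a b c}, r a b → r b c → r a c)
    (f : ℕ → ℕ) (h : ∀ n, r (f n) (f (n + 1))) : ∀ n m, n < m → r (f n) (f m) := by
  intro n m hnm
  induction m with
  | zero => omega
  | succ k ih =>
      rcases Nat.lt_succ_iff_lt_or_eq.mp hnm with h' | h'
      · exact htr (ih h') (h k)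
      · subst h'; exact h n


/-- If a strict linear order on ℕ is not stable-ish, then it computes a solution to
itself: there is a function, recursive in the characteristic function of the code of
the order, which is an infinite ascending or descending sequence. -/
theorem not_stableIsh_computes_solution (prec : ℕ → ℕ → Prop)
    (hlin : IsStrictTotalOrder ℕ prec) (h : ¬ StableIsh prec) :
    ∃ f : ℕ → ℕ, OracleRecursiveIn (charFun (codeRel prec)) ↑f ∧
      ((∀ n m, n < m → prec (f n) (f m)) ∨ (∀ n m, n < m → prec (f m) (f n))) := by
  have htri : ∀ a b, prec a b ∨ a = b ∨ prec b a := fun a b => by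
    by_cases h1 : prec a b
    · exact Or.inl h1
    by_cases h2 : prec b a
    · exact Or.inr (Or.inr h2)
    exact Or.inr (Or.inl (hlin.trichotomous a b h1 h2))
  have htrans : ∀ {a b c}, prec a b → prec b c → prec a c :=
    fun h1 h2 => hlin.trans _ _ _ h1 h2
  classical
  set O := charFun (codeRel prec) with hOdef
  have hO : ∀ x y, O (Nat.pair x y) = if prec x y then 1 else 0 := by
    intro x y
    have hmem : (Nat.pair x y ∈ codeRel prec) ↔ prec x y := by
      constructor
      · rintro ⟨a, b, hab, e⟩
        obtain ⟨rfl, rfl⟩ := Nat.pair_eq_pair.mp e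
        exact hab
      · intro hp; exact ⟨x, y, hp, rfl⟩
    simp [hOdef, charFun, Set.indicator_apply, hmem]
  by_cases hsucc : ∀ x, ∃ y, prec x y
  · -- every element has a successor: ascending sequence
    have ht : OracleRecursiveIn O ↑(fun p : ℕ => 1 - O p) :=
      OracleRecursiveIn.totalComp₂ Primrec.nat_sub (OracleRecursiveIn.of_primrec (Primrec.const 1))
        OracleRecursiveIn.oracle
    have tspec : ∀ x y, (fun p : ℕ => 1 - O p) (Nat.pair x y) = 0 ↔ prec x y := by
      intro x y
      by_cases hp : prec x y <;> simp [hO, hp]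
    have htot : ∀ x, ∃ y, (fun p : ℕ => 1 - O p) (Nat.pair x y) = 0 := by
      intro x
      obtain ⟨y, hy⟩ := hsucc x
      exact ⟨y, (tspec x y).mpr hy⟩
    refine ⟨_, OracleRecursiveIn.recSearch ht 0 htot, Or.inl ?_⟩
    set f : ℕ → ℕ := fun n => Nat.rec 0 (fun _ ih => Nat.find (htot ih)) n with hfdef
    have hstep : ∀ n, prec (f n) (f (n + 1)) := by
      intro n
      show prec (f n) (Nat.find (htot (f n)))
      exact (tspec _ _).mp (Nat.find_spec (htot (f n)))
    exact chain_of_step (r := prec) htrans f hstep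
  · by_cases hpred : ∀ x, ∃ y, prec y x
    · -- every element has a predecessor: descending sequence
      have hswap : Primrec (fun m : ℕ => Nat.pair m.unpair.2 m.unpair.1) :=
        Primrec₂.natPair.comp (Primrec.snd.comp Primrec.unpair) (Primrec.fst.comp Primrec.unpair)
      have ht : OracleRecursiveIn O ↑(fun p : ℕ => 1 - O (Nat.pair p.unpair.2 p.unpair.1)) :=
        OracleRecursiveIn.totalComp₂ Primrec.nat_sub (OracleRecursiveIn.of_primrec (Primrec.const 1))
          (OracleRecursiveIn.totalComp OracleRecursiveIn.oracle (OracleRecursiveIn.of_primrec hswap))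
      have tspec : ∀ x y,
          (fun p : ℕ => 1 - O (Nat.pair p.unpair.2 p.unpair.1)) (Nat.pair x y) = 0 ↔ prec y x := by
        intro x y
        by_cases hp : prec y x <;> simp [hO, hp, Nat.unpair_pair]
      have htot : ∀ x, ∃ y,
          (fun p : ℕ => 1 - O (Nat.pair p.unpair.2 p.unpair.1)) (Nat.pair x y) = 0 := by
        intro x
        obtain ⟨y, hy⟩ := hpred x
        exact ⟨y, (tspec x y).mpr hy⟩
      refine ⟨_, OracleRecursiveIn.recSearch ht 0 htot, Or.inr ?_⟩
      set f : ℕ → ℕ := fun n => Nat.rec 0 (fun _ ih => Nat.find (htot ih)) n with hfdef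
      have hstep : ∀ n, prec (f (n + 1)) (f n) := by
        intro n
        show prec (Nat.find (htot (f n))) (f n)
        exact (tspec _ _).mp (Nat.find_spec (htot (f n)))
      exact chain_of_step (r := fun a b => prec b a) (fun h1 h2 => htrans h2 h1) f hstep
    · -- there are both a maximum M and a minimum m
      push_neg at hsucc hpred
      obtain ⟨M, hM⟩ := hsucc
      obtain ⟨m, hm⟩ := hpred
      set W : Set ℕ := {x | {y | prec x y}.Infinite} with hWdef
      have hdown : ∀ x y, prec x y → y ∈ W → x ∈ W := by
        intro x y hxy hyW
        exact hyW.mono fun z hz => htrans hxy hz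
      have hmW : m ∈ W := by
        have : ({m}ᶜ : Set ℕ) ⊆ {y | prec m y} := by
          intro y hy
          rcases htri m y with h1 | h2 | h3
          · exact h1
          · exact absurd h2.symm hy
          · exact absurd h3 (hm y)
        exact ((Set.finite_singleton m).infinite_compl).mono this
      have hMWc : M ∈ Wᶜ := by
        intro hMW
        have : {y | prec M y} = ∅ := Set.eq_empty_iff_forall_notMem.mpr hM
        rw [hWdef] at hMW
        simp only [Set.mem_setOf_eq, this] at hMW
        exact hMW (Set.finite_empty)
      by_cases hmax : ∀ x ∈ W, ∃ y ∈ W, prec x y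
      · -- W has no max; so Wᶜ must have a minimal element g; ascend below g
        have hmin : ¬ ∀ x ∈ Wᶜ, ∃ y ∈ Wᶜ, prec y x :=
          fun hmin => h ⟨W, ⟨m, hmW⟩, hdown, hmax, ⟨M, hMWc⟩, hmin⟩
        push_neg at hmin
        obtain ⟨g, hgWc, hgmin⟩ := hmin
        have hgfin : {y | prec g y}.Finite := Set.not_infinite.mp hgWc
        have claim : ∀ x, prec x g → ∃ y, prec x y ∧ prec y g := by
          intro x hxg
          have hxW : x ∈ W := by
            by_contra hx
            exact hgmin x hx hxg
          by_contra hno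
          push_neg at hno
          have hsub : {y | prec x y} ⊆ insert g {y | prec g y} := by
            intro y hy
            rcases htri y g with h1 | h2 | h3
            · exact absurd h1 (hno y hy)
            · exact Set.mem_insert_iff.mpr (Or.inl h2)
            · exact Set.mem_insert_iff.mpr (Or.inr h3)
          exact hxW ((hgfin.insert g).subset hsub)
        have hmg : prec m g := by
          rcases htri m g with h1 | h2 | h3
          · exact h1
          · exact absurd (h2 ▸ hmW) hgWc
          · exact absurd h3 (hm g)
        -- t p = O(pair p.1 g) * ((1 - O p) + (1 - O (pair p.2 g)))
        set t : ℕ → ℕ := fun p =>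
          O (Nat.pair p.unpair.1 g) * ((1 - O p) + (1 - O (Nat.pair p.unpair.2 g))) with htdef
        have ht : OracleRecursiveIn O ↑t := by
          have h1 : OracleRecursiveIn O ↑(fun p : ℕ => O (Nat.pair p.unpair.1 g)) :=
            OracleRecursiveIn.totalComp OracleRecursiveIn.oracle (OracleRecursiveIn.of_primrec
              (Primrec₂.natPair.comp (Primrec.fst.comp Primrec.unpair) (Primrec.const g)))
          have h2 : OracleRecursiveIn O ↑(fun p : ℕ => 1 - O p) :=
            OracleRecursiveIn.totalComp₂ Primrec.nat_sub (OracleRecursiveIn.of_primrec (Primrec.const 1))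
              OracleRecursiveIn.oracle
          have h3 : OracleRecursiveIn O ↑(fun p : ℕ => 1 - O (Nat.pair p.unpair.2 g)) :=
            OracleRecursiveIn.totalComp₂ Primrec.nat_sub (OracleRecursiveIn.of_primrec (Primrec.const 1))
              (OracleRecursiveIn.totalComp OracleRecursiveIn.oracle (OracleRecursiveIn.of_primrec
                (Primrec₂.natPair.comp (Primrec.snd.comp Primrec.unpair) (Primrec.const g))))
          exact OracleRecursiveIn.totalComp₂ Primrec.nat_mul h1
            (OracleRecursiveIn.totalComp₂ Primrec.nat_add h2 h3)
        have tspec : ∀ x y, t (Nat.pair x y) = 0 ↔ (prec x g → prec x y ∧ prec y g) := by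
          intro x y
          by_cases h1 : prec x g <;> by_cases h2 : prec x y <;> by_cases h3 : prec y g <;>
            simp [htdef, Nat.unpair_pair, hO, h1, h2, h3]
        have htot : ∀ x, ∃ y, t (Nat.pair x y) = 0 := by
          intro x
          by_cases hxg : prec x g
          · obtain ⟨y, hy1, hy2⟩ := claim x hxg
            exact ⟨y, (tspec x y).mpr fun _ => ⟨hy1, hy2⟩⟩
          · exact ⟨0, (tspec x 0).mpr fun hx => absurd hx hxg⟩
        refine ⟨_, OracleRecursiveIn.recSearch ht m htot, Or.inl ?_⟩
        set f : ℕ → ℕ := fun n => Nat.rec m (fun _ ih => Nat.find (htot ih)) n with hfdef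
        have hg : ∀ n, prec (f n) g := by
          intro n
          induction n with
          | zero => exact hmg
          | succ k ih =>
              show prec (Nat.find (htot (f k))) g
              have hspec := (tspec (f k) (Nat.find (htot (f k)))).mp (Nat.find_spec (htot (f k)))
              exact (hspec ih).2
        have hstep : ∀ n, prec (f n) (f (n + 1)) := by
          intro n
          show prec (f n) (Nat.find (htot (f n)))
          have hspec := (tspec (f n) (Nat.find (htot (f n)))).mp (Nat.find_spec (htot (f n)))
          exact (hspec (hg n)).1
        exact chain_of_step (r := prec) htrans f hstep
      · -- W has a maximal element w; descend above w
        push_neg at hmax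
        obtain ⟨w, hwW, hwmax⟩ := hmax
        have claim : ∀ x, prec w x → ∃ y, prec y x ∧ prec w y := by
          intro x hwx
          have hxfin : {y | prec x y}.Finite := by
            have hx : x ∉ W := fun hx => hwmax x hx hwx
            exact Set.not_infinite.mp hx
          by_contra hno
          push_neg at hno
          have hsub : {y | prec w y} ⊆ insert x {y | prec x y} := by
            intro y hy
            rcases htri y x with h1 | h2 | h3
            · exact absurd hy (hno y h1)
            · exact Set.mem_insert_iff.mpr (Or.inl h2)
            · exact Set.mem_insert_iff.mpr (Or.inr h3)
          exact hwW ((hxfin.insert x).subset hsub)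
        have hwM : prec w M := by
          rcases htri w M with h1 | h2 | h3
          · exact h1
          · exact absurd (h2 ▸ hwW) hMWc
          · exact absurd h3 (hM w)
        set t : ℕ → ℕ := fun p =>
          O (Nat.pair w p.unpair.1) *
            ((1 - O (Nat.pair p.unpair.2 p.unpair.1)) + (1 - O (Nat.pair w p.unpair.2))) with htdef
        have ht : OracleRecursiveIn O ↑t := by
          have h1 : OracleRecursiveIn O ↑(fun p : ℕ => O (Nat.pair w p.unpair.1)) :=
            OracleRecursiveIn.totalComp OracleRecursiveIn.oracle (OracleRecursiveIn.of_primrec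
              (Primrec₂.natPair.comp (Primrec.const w) (Primrec.fst.comp Primrec.unpair)))
          have h2 : OracleRecursiveIn O ↑(fun p : ℕ => 1 - O (Nat.pair p.unpair.2 p.unpair.1)) :=
            OracleRecursiveIn.totalComp₂ Primrec.nat_sub (OracleRecursiveIn.of_primrec (Primrec.const 1))
              (OracleRecursiveIn.totalComp OracleRecursiveIn.oracle (OracleRecursiveIn.of_primrec
                (Primrec₂.natPair.comp (Primrec.snd.comp Primrec.unpair)
                  (Primrec.fst.comp Primrec.unpair))))
          have h3 : OracleRecursiveIn O ↑(fun p : ℕ => 1 - O (Nat.pair w p.unpair.2)) :=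
            OracleRecursiveIn.totalComp₂ Primrec.nat_sub (OracleRecursiveIn.of_primrec (Primrec.const 1))
              (OracleRecursiveIn.totalComp OracleRecursiveIn.oracle (OracleRecursiveIn.of_primrec
                (Primrec₂.natPair.comp (Primrec.const w) (Primrec.snd.comp Primrec.unpair))))
          exact OracleRecursiveIn.totalComp₂ Primrec.nat_mul h1
            (OracleRecursiveIn.totalComp₂ Primrec.nat_add h2 h3)
        have tspec : ∀ x y, t (Nat.pair x y) = 0 ↔ (prec w x → prec y x ∧ prec w y) := by
          intro x y
          by_cases h1 : prec w x <;> by_cases h2 : prec y x <;> by_cases h3 : prec w y <;>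
            simp [htdef, Nat.unpair_pair, hO, h1, h2, h3]
        have htot : ∀ x, ∃ y, t (Nat.pair x y) = 0 := by
          intro x
          by_cases hwx : prec w x
          · obtain ⟨y, hy1, hy2⟩ := claim x hwx
            exact ⟨y, (tspec x y).mpr fun _ => ⟨hy1, hy2⟩⟩
          · exact ⟨0, (tspec x 0).mpr fun hx => absurd hx hwx⟩
        refine ⟨_, OracleRecursiveIn.recSearch ht M htot, Or.inr ?_⟩
        set f : ℕ → ℕ := fun n => Nat.rec M (fun _ ih => Nat.find (htot ih)) n with hfdef
        have hg : ∀ n, prec w (f n) := by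
          intro n
          induction n with
          | zero => exact hwM
          | succ k ih =>
              show prec w (Nat.find (htot (f k)))
              have hspec := (tspec (f k) (Nat.find (htot (f k)))).mp (Nat.find_spec (htot (f k)))
              exact (hspec ih).2
        have hstep : ∀ n, prec (f (n + 1)) (f n) := by
          intro n
          show prec (Nat.find (htot (f n))) (f n)
          have hspec := (tspec (f n) (Nat.find (htot (f n)))).mp (Nat.find_spec (htot (f n)))
          exact (hspec (hg n)).1
        exact chain_of_step (r := fun a b => prec b a) (fun h1 h2 => htrans h2 h1) f hstep
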